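/- arXiv:1510.06654 — 6 statements merged into one kernel-verified Lean document; each statement's English description precedes it below -/
import Mathlib

section
/- The determinant of the 2×2 complex matrix L with entries L₁₁ = cot(δ/2)·(l/s) + tan(δ/2)·l·s₁, L₁₂ = i(λ − s·s₁/λ), L₂₁ = i(λ − 1/(λ·s·s₁)), L₂₂ = cot(δ/2)·(s/l) + tan(δ/2)/(l·s₁) equals λ² + 1/λ² + tan²(δ/2) + cot²(δ/2). -/
open Complex Matrix

theorem aux_a1 (c sn l s s₁ : ℂ) (hc : c ≠ 0) (hsn : sn ≠ 0) (hs : s ≠ 0) :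
    c / sn * (l / s) + sn / c * l * s₁ = l * (c ^ 2 + sn ^ 2 * (s * s₁)) / (c * sn * s) := by
  field_simp

theorem aux_a2 (c sn l s s₁ : ℂ) (hc : c ≠ 0) (hsn : sn ≠ 0) (hl : l ≠ 0) (hs₁ : s₁ ≠ 0) :
    c / sn * (s / l) + sn / c / (l * s₁) = (c ^ 2 * (s * s₁) + sn ^ 2) / (c * sn * (l * s₁)) := by
  field_simp

theorem aux_a3 (c sn s s₁ : ℂ) (hc : c ≠ 0) (hsn : sn ≠ 0) (hs : s ≠ 0) (hs₁ : s₁ ≠ 0) :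
    (c ^ 2 + sn ^ 2 * (s * s₁)) * (c ^ 2 * (s * s₁) + sn ^ 2) / (c * sn * s * (c * sn * s₁))
      = (c / sn) ^ 2 + (sn / c) ^ 2 + s * s₁ + 1 / (s * s₁) := by
  field_simp
  ring

/-- determinant of the cK-net Lax matrix `L`. -/
theorem stmt_0 (lam l s s₁ δ : ℂ) (hlam : lam ≠ 0) (hl : l ≠ 0) (hs : s ≠ 0)
    (hs₁ : s₁ ≠ 0) (hcos : Complex.cos (δ / 2) ≠ 0) (hsin : Complex.sin (δ / 2) ≠ 0) :
    (!![Complex.cot (δ / 2) * (l / s) + Complex.tan (δ / 2) * l * s₁,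
        I * (lam - s * s₁ / lam);
        I * (lam - 1 / (lam * s * s₁)),
        Complex.cot (δ / 2) * (s / l) + Complex.tan (δ / 2) / (l * s₁)]).det =
      lam ^ 2 + 1 / lam ^ 2 + Complex.tan (δ / 2) ^ 2 + Complex.cot (δ / 2) ^ 2 := by
  rw [Matrix.det_fin_two_of, Complex.tan_eq_sin_div_cos, Complex.cot_eq_cos_div_sin,
    mul_mul_mul_comm, Complex.I_mul_I]
  set c := Complex.cos (δ / 2) with hc
  set sn := Complex.sin (δ / 2) with hsn
  have h1 : (c / sn * (l / s) + sn / c * l * s₁) * (c / sn * (s / l) + sn / c / (l * s₁))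
      = (c / sn) ^ 2 + (sn / c) ^ 2 + s * s₁ + 1 / (s * s₁) := by
    calc (c / sn * (l / s) + sn / c * l * s₁) * (c / sn * (s / l) + sn / c / (l * s₁))
        = l * (c ^ 2 + sn ^ 2 * (s * s₁)) / (c * sn * s) *
            ((c ^ 2 * (s * s₁) + sn ^ 2) / (c * sn * (l * s₁))) := by
          rw [aux_a1 c sn l s s₁ hcos hsin hs, aux_a2 c sn l s s₁ hcos hsin hl hs₁]
      _ = l * ((c ^ 2 + sn ^ 2 * (s * s₁)) * (c ^ 2 * (s * s₁) + sn ^ 2)) /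
            (l * (c * sn * s * (c * sn * s₁))) := by
          rw [div_mul_div_comm]
          congr 1
          · ring
          · ring
      _ = (c ^ 2 + sn ^ 2 * (s * s₁)) * (c ^ 2 * (s * s₁) + sn ^ 2) /
            (c * sn * s * (c * sn * s₁)) := mul_div_mul_left _ _ hl
      _ = (c / sn) ^ 2 + (sn / c) ^ 2 + s * s₁ + 1 / (s * s₁) :=
          aux_a3 c sn s s₁ hcos hsin hs hs₁
  have h2 : (lam - s * s₁ / lam) * (lam - 1 / (lam * s * s₁))
      = lam ^ 2 + 1 / lam ^ 2 - s * s₁ - 1 / (s * s₁) := by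
    field_simp
    ring
  rw [h1, h2]
  ring
end

section
/- For each fixed k, the four points f(k,ℓ), f(k+1,ℓ), f(k,ℓ+1), f(k+1,ℓ+1) of the discrete pseudosphere f(k,ℓ) = (εk − tanh(τk), cos(ℓφ)·sech(τk), sin(ℓφ)·sech(τk)), with τ = log((2+ε)/(2−ε)) and 0 < ε < 2, lie on a common circle (are concircular, i.e., coplanar and equidistant from a common point). -/
/-- Euclidean dot product on `ℝ³`. -/
def dot3 (u v : Fin 3 → ℝ) : ℝ := u 0 * v 0 + u 1 * v 1 + u 2 * v 2

/-- The discrete pseudosphere of revolution. -/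
noncomputable def fPseudo (ε φ τ : ℝ) (k ℓ : ℤ) : Fin 3 → ℝ :=
  ![ε * k - Real.tanh (τ * k),
    Real.cos (ℓ * φ) * (1 / Real.cosh (τ * k)),
    Real.sin (ℓ * φ) * (1 / Real.cosh (τ * k))]

lemma dot3_self_nonneg (u : Fin 3 → ℝ) : 0 ≤ dot3 u u := by
  simp only [dot3, ← pow_two]; positivity

lemma key_quad (A1 A2 S1 S2 L φ : ℝ) (hA : A2 - A1 ≠ 0) :
    ∃ (c w : Fin 3 → ℝ) (r : ℝ), w ≠ 0 ∧
      dot3 (![A1, Real.cos L * S1, Real.sin L * S1] - c)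
           (![A1, Real.cos L * S1, Real.sin L * S1] - c) = r ^ 2 ∧
      dot3 (![A2, Real.cos L * S2, Real.sin L * S2] - c)
           (![A2, Real.cos L * S2, Real.sin L * S2] - c) = r ^ 2 ∧
      dot3 (![A1, Real.cos (L + φ) * S1, Real.sin (L + φ) * S1] - c)
           (![A1, Real.cos (L + φ) * S1, Real.sin (L + φ) * S1] - c) = r ^ 2 ∧
      dot3 (![A2, Real.cos (L + φ) * S2, Real.sin (L + φ) * S2] - c)
           (![A2, Real.cos (L + φ) * S2, Real.sin (L + φ) * S2] - c) = r ^ 2 ∧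
      dot3 w (![A2, Real.cos L * S2, Real.sin L * S2] - ![A1, Real.cos L * S1, Real.sin L * S1]) = 0 ∧
      dot3 w (![A1, Real.cos (L + φ) * S1, Real.sin (L + φ) * S1] - ![A1, Real.cos L * S1, Real.sin L * S1]) = 0 ∧
      dot3 w (![A2, Real.cos (L + φ) * S2, Real.sin (L + φ) * S2] - ![A1, Real.cos L * S1, Real.sin L * S1]) = 0 ∧
      dot3 w (c - ![A1, Real.cos L * S1, Real.sin L * S1]) = 0 := by
  have hc := Real.cos_sub (L + φ/2) (φ/2)
  rw [add_sub_cancel_right] at hc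
  have hd := Real.sin_sub (L + φ/2) (φ/2)
  rw [add_sub_cancel_right] at hd
  have hc' := Real.cos_add (L + φ/2) (φ/2)
  rw [show L + φ/2 + φ/2 = L + φ by ring] at hc'
  have hd' := Real.sin_add (L + φ/2) (φ/2)
  rw [show L + φ/2 + φ/2 = L + φ by ring] at hd'
  rw [hc, hd, hc', hd']
  have hθ : Real.sin (L + φ/2) ^ 2 + Real.cos (L + φ/2) ^ 2 = 1 := Real.sin_sq_add_cos_sq _
  have hF : Real.sin (φ/2) ^ 2 + Real.cos (φ/2) ^ 2 = 1 := Real.sin_sq_add_cos_sq _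
  set ct := Real.cos (L + φ/2) with hct
  set st := Real.sin (L + φ/2) with hst
  set C := Real.cos (φ/2) with hCdef
  set F := Real.sin (φ/2) with hFdef
  clear hc hd hc' hd' hct hst hCdef hFdef
  obtain ⟨x0, hx0⟩ : ∃ x0, 2*(A2-A1)*x0 = (A2-A1)*(A1+A2) + (S2-S1)*(S1+S2) :=
    ⟨((A2-A1)*(A1+A2) + (S2-S1)*(S1+S2))/(2*(A2-A1)), by field_simp⟩
  have hApos : 0 < (A2-A1)^2 := lt_of_le_of_ne (sq_nonneg _) (Ne.symm (pow_ne_zero 2 hA))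
  have hN : (0:ℝ) < ((S2-S1)*C)^2 + (A2-A1)^2 := add_pos_of_nonneg_of_pos (sq_nonneg _) hApos
  obtain ⟨mu, hmu⟩ : ∃ mu, mu*(((S2-S1)*C)^2 + (A2-A1)^2) = C*((S2-S1)*(x0-A1) + (A2-A1)*S1) :=
    ⟨C*((S2-S1)*(x0-A1) + (A2-A1)*S1)/(((S2-S1)*C)^2 + (A2-A1)^2), by field_simp⟩
  refine ⟨![x0 - mu*((S2-S1)*C), mu*((A2-A1)*ct), mu*((A2-A1)*st)],
         ![(S2-S1)*C, -((A2-A1)*ct), -((A2-A1)*st)],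
         Real.sqrt (dot3 (![A1, (ct*C + st*F) * S1, (st*C - ct*F) * S1] -
             ![x0 - mu*((S2-S1)*C), mu*((A2-A1)*ct), mu*((A2-A1)*st)])
           (![A1, (ct*C + st*F) * S1, (st*C - ct*F) * S1] -
             ![x0 - mu*((S2-S1)*C), mu*((A2-A1)*ct), mu*((A2-A1)*st)])),
         ?_, ?_, ?_, ?_, ?_, ?_, ?_, ?_, ?_⟩
  · intro h
    have h1 : -((A2-A1)*ct) = 0 := by simpa using congrFun h 1
    have h2 : -((A2-A1)*st) = 0 := by simpa using congrFun h 2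
    apply hA
    linear_combination (-ct)*h1 + (-st)*h2 - (A2-A1)*hθ
  · exact (Real.sq_sqrt (dot3_self_nonneg _)).symm
  · rw [Real.sq_sqrt (dot3_self_nonneg _)]
    simp only [dot3, Matrix.cons_val_zero, Matrix.cons_val_one, Matrix.head_cons,
      Matrix.cons_val_two, Matrix.tail_cons, Pi.sub_apply]
    linear_combination ((S2-S1)*(S1+S2)*(C^2+F^2) - 2*mu*(A2-A1)*(S2-S1)*C)*hθ
      + (S2-S1)*(S1+S2)*hF - hx0
  · rw [Real.sq_sqrt (dot3_self_nonneg _)]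
    simp only [dot3, Matrix.cons_val_zero, Matrix.cons_val_one, Matrix.head_cons,
      Matrix.cons_val_two, Matrix.tail_cons, Pi.sub_apply]
    ring
  · rw [Real.sq_sqrt (dot3_self_nonneg _)]
    simp only [dot3, Matrix.cons_val_zero, Matrix.cons_val_one, Matrix.head_cons,
      Matrix.cons_val_two, Matrix.tail_cons, Pi.sub_apply]
    linear_combination ((S2-S1)*(S1+S2)*(C^2+F^2) - 2*mu*(A2-A1)*(S2-S1)*C)*hθ
      + (S2-S1)*(S1+S2)*hF - hx0
  · simp only [dot3, Matrix.cons_val_zero, Matrix.cons_val_one, Matrix.head_cons,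
      Matrix.cons_val_two, Matrix.tail_cons, Pi.sub_apply]
    linear_combination (-((A2-A1)*(S2-S1)*C))*hθ
  · simp only [dot3, Matrix.cons_val_zero, Matrix.cons_val_one, Matrix.head_cons,
      Matrix.cons_val_two, Matrix.tail_cons, Pi.sub_apply]
    ring
  · simp only [dot3, Matrix.cons_val_zero, Matrix.cons_val_one, Matrix.head_cons,
      Matrix.cons_val_two, Matrix.tail_cons, Pi.sub_apply]
    linear_combination (-((A2-A1)*(S2-S1)*C))*hθ
  · simp only [dot3, Matrix.cons_val_zero, Matrix.cons_val_one, Matrix.head_cons,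
      Matrix.cons_val_two, Matrix.tail_cons, Pi.sub_apply]
    linear_combination (-1)*hmu + ((A2-A1)*S1*C - mu*(A2-A1)^2)*hθ

/-- each quad of the discrete pseudosphere is concircular: the four
vertices are coplanar (plane with normal `w`, also containing the center `c`) and
equidistant from the common point `c`. -/
theorem stmt_2 (ε φ : ℝ) (hε0 : 0 < ε) (hε2 : ε < 2)
    (τ : ℝ) (hτ : τ = Real.log ((2 + ε) / (2 - ε))) (k ℓ : ℤ) :
    ∃ (c w : Fin 3 → ℝ) (r : ℝ), w ≠ 0 ∧
      dot3 (fPseudo ε φ τ k ℓ - c) (fPseudo ε φ τ k ℓ - c) = r ^ 2 ∧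
      dot3 (fPseudo ε φ τ (k + 1) ℓ - c) (fPseudo ε φ τ (k + 1) ℓ - c) = r ^ 2 ∧
      dot3 (fPseudo ε φ τ k (ℓ + 1) - c) (fPseudo ε φ τ k (ℓ + 1) - c) = r ^ 2 ∧
      dot3 (fPseudo ε φ τ (k + 1) (ℓ + 1) - c) (fPseudo ε φ τ (k + 1) (ℓ + 1) - c) = r ^ 2 ∧
      dot3 w (fPseudo ε φ τ (k + 1) ℓ - fPseudo ε φ τ k ℓ) = 0 ∧
      dot3 w (fPseudo ε φ τ k (ℓ + 1) - fPseudo ε φ τ k ℓ) = 0 ∧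
      dot3 w (fPseudo ε φ τ (k + 1) (ℓ + 1) - fPseudo ε φ τ k ℓ) = 0 ∧
      dot3 w (c - fPseudo ε φ τ k ℓ) = 0 := by
  have h2ε : (0:ℝ) < 2 - ε := by linarith
  set q : ℝ := (2+ε)/(2-ε) with hqdef
  have hq0 : 0 < q := by positivity
  have hq1 : 1 < q := by rw [hqdef, lt_div_iff₀ h2ε]; linarith
  have hτpos : 0 < τ := by rw [hτ]; exact Real.log_pos hq1
  have hexpτ : Real.exp τ = q := by rw [hτ, Real.exp_log hq0]
  set Q : ℝ := Real.exp (τ*(k:ℝ)) with hQdef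
  have hQ0 : 0 < Q := Real.exp_pos _
  have hQq : Real.exp (τ*((k:ℝ)+1)) = Q*q := by
    rw [mul_add, mul_one, Real.exp_add, hexpτ]
  have hT1 : Real.tanh (τ*(k:ℝ)) = (Q^2-1)/(Q^2+1) := by
    rw [Real.tanh_eq_sinh_div_cosh, Real.sinh_eq, Real.cosh_eq, Real.exp_neg, ← hQdef]
    rw [div_div_div_eq]
    field_simp
  have hT2 : Real.tanh (τ*((k:ℝ)+1)) = ((Q*q)^2-1)/((Q*q)^2+1) := by
    rw [Real.tanh_eq_sinh_div_cosh, Real.sinh_eq, Real.cosh_eq, Real.exp_neg, hQq]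
    rw [div_div_div_eq]
    have : Q*q ≠ 0 := by positivity
    field_simp
  have hne : Q^2*q ≠ 1 := by
    have h1 : Real.exp (τ*(2*(k:ℝ)+1)) = Q^2*q := by
      rw [show τ*(2*(k:ℝ)+1) = τ*(k:ℝ) + (τ*(k:ℝ) + τ) by ring, Real.exp_add, Real.exp_add,
        hexpτ, ← hQdef]; ring
    intro h
    have h2 : τ*(2*(k:ℝ)+1) = 0 := Real.exp_injective (by rw [h1, h, Real.exp_zero])
    have h3 : (2*(k:ℝ)+1) = 0 := (mul_eq_zero.1 h2).resolve_left hτpos.ne'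
    have h4 : ((2*k+1 : ℤ):ℝ) = 0 := by push_cast; linarith
    have h5 : (2*k+1 : ℤ) = 0 := by exact_mod_cast h4
    omega
  have hA : (ε*((k:ℝ)+1) - Real.tanh (τ*((k:ℝ)+1))) - (ε*(k:ℝ) - Real.tanh (τ*(k:ℝ))) ≠ 0 := by
    rw [hT1, hT2]
    have hd1 : (0:ℝ) < Q^2+1 := by positivity
    have hd2 : (0:ℝ) < (Q*q)^2+1 := by positivity
    have hεq : ε = 2*(q-1)/(q+1) := by
      rw [hqdef]; field_simp; ring
    have hkey : (ε*((k:ℝ)+1) - ((Q*q)^2-1)/((Q*q)^2+1)) - (ε*(k:ℝ) - (Q^2-1)/(Q^2+1))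
        = 2*(q-1)*(Q^2*q-1)^2/((q+1)*((Q*q)^2+1)*(Q^2+1)) := by
      rw [hεq]
      have hq1' : q + 1 ≠ 0 := by positivity
      field_simp
      ring
    rw [hkey]
    have hnum : 0 < (Q^2*q-1)^2 :=
      lt_of_le_of_ne (sq_nonneg _) (Ne.symm (pow_ne_zero 2 (sub_ne_zero.2 hne)))
    exact ne_of_gt (div_pos (mul_pos (by linarith) hnum) (by positivity))
  have hP1 : fPseudo ε φ τ k ℓ
      = ![ε*(k:ℝ) - Real.tanh (τ*(k:ℝ)),
          Real.cos ((ℓ:ℝ)*φ) * (1/Real.cosh (τ*(k:ℝ))),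
          Real.sin ((ℓ:ℝ)*φ) * (1/Real.cosh (τ*(k:ℝ)))] := rfl
  have hP2 : fPseudo ε φ τ (k+1) ℓ
      = ![ε*((k:ℝ)+1) - Real.tanh (τ*((k:ℝ)+1)),
          Real.cos ((ℓ:ℝ)*φ) * (1/Real.cosh (τ*((k:ℝ)+1))),
          Real.sin ((ℓ:ℝ)*φ) * (1/Real.cosh (τ*((k:ℝ)+1)))] := by
    unfold fPseudo; push_cast; rfl
  have hP3 : fPseudo ε φ τ k (ℓ+1)
      = ![ε*(k:ℝ) - Real.tanh (τ*(k:ℝ)),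
          Real.cos ((ℓ:ℝ)*φ + φ) * (1/Real.cosh (τ*(k:ℝ))),
          Real.sin ((ℓ:ℝ)*φ + φ) * (1/Real.cosh (τ*(k:ℝ)))] := by
    unfold fPseudo; push_cast; ring_nf
  have hP4 : fPseudo ε φ τ (k+1) (ℓ+1)
      = ![ε*((k:ℝ)+1) - Real.tanh (τ*((k:ℝ)+1)),
          Real.cos ((ℓ:ℝ)*φ + φ) * (1/Real.cosh (τ*((k:ℝ)+1))),
          Real.sin ((ℓ:ℝ)*φ + φ) * (1/Real.cosh (τ*((k:ℝ)+1)))] := by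
    unfold fPseudo; push_cast; ring_nf
  rw [hP1, hP2, hP3, hP4]
  exact key_quad (ε*(k:ℝ) - Real.tanh (τ*(k:ℝ))) (ε*((k:ℝ)+1) - Real.tanh (τ*((k:ℝ)+1)))
    (1/Real.cosh (τ*(k:ℝ))) (1/Real.cosh (τ*((k:ℝ)+1))) ((ℓ:ℝ)*φ) φ hA
end

section
/- For the discrete pseudosphere f(k,ℓ) = (εk − tanh(τk), cos(ℓφ)·sech(τk), sin(ℓφ)·sech(τk)) with normals n(k,ℓ) = (sech(τk), cos(ℓφ)·tanh(τk), sin(ℓφ)·tanh(τk)), where τ = log((2+ε)/(2−ε)) and 0 < ε < 2, φ ∈ (0,π), the discrete Gauss curvature of each quad, K = det(n₁₂−n, n₂−n₁, N) / det(f₁₂−f, f₂−f₁, N), equals −1 for any unit vector N perpendicular to both n₁₂−n and n₂−n₁ with nonzero denominator. -/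
/-- `3×3` determinant of three vectors of `ℝ³`. -/
def det3 (u v w : Fin 3 → ℝ) : ℝ :=
  Matrix.det !![u 0, v 0, w 0; u 1, v 1, w 1; u 2, v 2, w 2]

/-- Its Gauss map. -/
noncomputable def nPseudo (φ τ : ℝ) (k ℓ : ℤ) : Fin 3 → ℝ :=
  ![1 / Real.cosh (τ * k),
    Real.cos (ℓ * φ) * Real.tanh (τ * k),
    Real.sin (ℓ * φ) * Real.tanh (τ * k)]

/-- the discrete Gauss curvature of each quad of the discrete
pseudosphere equals `−1`, for any admissible face normal `N`. -/
theorem stmt_5 (ε φ : ℝ) (hε0 : 0 < ε) (hε2 : ε < 2) (hφ0 : 0 < φ) (hφπ : φ < Real.pi)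
    (τ : ℝ) (hτ : τ = Real.log ((2 + ε) / (2 - ε))) (k ℓ : ℤ)
    (N : Fin 3 → ℝ) (hNunit : dot3 N N = 1)
    (hN1 : dot3 N (nPseudo φ τ (k + 1) (ℓ + 1) - nPseudo φ τ k ℓ) = 0)
    (hN2 : dot3 N (nPseudo φ τ k (ℓ + 1) - nPseudo φ τ (k + 1) ℓ) = 0)
    (hden : det3 (fPseudo ε φ τ (k + 1) (ℓ + 1) - fPseudo ε φ τ k ℓ)
      (fPseudo ε φ τ k (ℓ + 1) - fPseudo ε φ τ (k + 1) ℓ) N ≠ 0) :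
    det3 (nPseudo φ τ (k + 1) (ℓ + 1) - nPseudo φ τ k ℓ)
        (nPseudo φ τ k (ℓ + 1) - nPseudo φ τ (k + 1) ℓ) N /
      det3 (fPseudo ε φ τ (k + 1) (ℓ + 1) - fPseudo ε φ τ k ℓ)
        (fPseudo ε φ τ k (ℓ + 1) - fPseudo ε φ τ (k + 1) ℓ) N = -1 := by
  have h2ε : (0:ℝ) < 2 - ε := by linarith
  have h2ε' : (0:ℝ) < 2 + ε := by linarith
  have hexp : Real.exp τ = (2 + ε) / (2 - ε) := by
    rw [hτ, Real.exp_log (by positivity)]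
  have hexpneg : Real.exp (-τ) = (2 - ε) / (2 + ε) := by
    rw [Real.exp_neg, hexp, inv_div]
  have hε4 : (4:ℝ) - ε^2 ≠ 0 := by nlinarith
  have hct : Real.cosh τ = (4 + ε^2) / (4 - ε^2) := by
    have := h2ε.ne'
    have := h2ε'.ne'
    rw [Real.cosh_eq, hexp, hexpneg]
    field_simp
    ring
  have hst : Real.sinh τ = 4 * ε / (4 - ε^2) := by
    have := h2ε.ne'
    have := h2ε'.ne'
    rw [Real.sinh_eq, hexp, hexpneg]
    field_simp
    ring
  set a : ℝ := τ * (k:ℝ) with ha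
  have hb : τ * ((k:ℝ) + 1) = a + τ := by ring
  have hca : Real.cosh a ≠ 0 := (Real.cosh_pos a).ne'
  have hcb : Real.cosh (a + τ) ≠ 0 := (Real.cosh_pos _).ne'
  -- F1 for a and for a+τ
  have F1 : ∀ x : ℝ, Real.tanh x ^ 2 + (1 / Real.cosh x)^2 = 1 := by
    intro x
    have h := Real.cosh_sq_sub_sinh_sq x
    have hc := (Real.cosh_pos x).ne'
    rw [Real.tanh_eq_sinh_div_cosh]
    field_simp
    linarith
  have F1a := F1 a
  have F1b := F1 (a + τ)
  -- F2
  have F2 : ε * (1 / Real.cosh a + 1 / Real.cosh (a + τ))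
      = 2 * ((1 / Real.cosh a) * Real.tanh (a + τ) - (1 / Real.cosh (a + τ)) * Real.tanh a) := by
    have F2' : ε * (Real.cosh (a + τ) + Real.cosh a) = 2 * (Real.sinh (a + τ) - Real.sinh a) := by
      rw [Real.sinh_add, Real.cosh_add, hct, hst]
      field_simp
      ring
    rw [Real.tanh_eq_sinh_div_cosh, Real.tanh_eq_sinh_div_cosh]
    have e1 : ε * (1 / Real.cosh a + 1 / Real.cosh (a + τ))
        = (ε * (Real.cosh (a + τ) + Real.cosh a)) / (Real.cosh a * Real.cosh (a + τ)) := by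
      field_simp
    have e2 : 2 * ((1 / Real.cosh a) * (Real.sinh (a + τ) / Real.cosh (a + τ))
          - (1 / Real.cosh (a + τ)) * (Real.sinh a / Real.cosh a))
        = (2 * (Real.sinh (a + τ) - Real.sinh a)) / (Real.cosh a * Real.cosh (a + τ)) := by
      field_simp
    rw [e1, e2, F2']
  have key : det3 (nPseudo φ τ (k + 1) (ℓ + 1) - nPseudo φ τ k ℓ)
        (nPseudo φ τ k (ℓ + 1) - nPseudo φ τ (k + 1) ℓ) N
      = - det3 (fPseudo ε φ τ (k + 1) (ℓ + 1) - fPseudo ε φ τ k ℓ)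
        (fPseudo ε φ τ k (ℓ + 1) - fPseudo ε φ τ (k + 1) ℓ) N := by
    simp [det3, fPseudo, nPseudo, Matrix.det_fin_three, Pi.sub_apply]
    push_cast
    rw [hb, ← ha]
    set c1 := Real.cos ((ℓ:ℝ) * φ)
    set s1 := Real.sin ((ℓ:ℝ) * φ)
    set c2 := Real.cos (((ℓ:ℝ) + 1) * φ)
    set s2 := Real.sin (((ℓ:ℝ) + 1) * φ)
    linear_combination (N 0) * (c1*s2 - c2*s1) * (F1b - F1a)
      + ((N 2)*(c2-c1) - (N 1)*(s2-s1)) * F2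
  rw [key, neg_div, div_self hden]
end

section
/- The Gauss curvature K = det(n₁₂−n, n₂−n₁, N)/det(f₁₂−f, f₂−f₁, N) of an edge-constraint quad is independent of the choice of face normal N: if N and N′ are both unit vectors perpendicular to span{n₁₂−n, n₂−n₁} with both denominators nonzero, the two quotients agree. -/
lemma key (a b e g N N' : Fin 3 → ℝ)
    (h1 : dot3 N a = 0) (h2 : dot3 N b = 0)
    (h3 : dot3 N' a = 0) (h4 : dot3 N' b = 0) :
    det3 a b N * det3 e g N' = det3 a b N' * det3 e g N := by
  simp only [dot3, det3, Matrix.det_fin_three, Matrix.of_apply, Matrix.cons_val', Matrix.cons_val_zero, Matrix.cons_val_one, Matrix.head_cons, Matrix.empty_val', Matrix.cons_val_fin_one, Matrix.head_fin_const, Matrix.cons_val_two, Matrix.tail_cons, Matrix.tail_val', Matrix.head_val'] at *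
  linear_combination
    (e 0 * (g 1 * (N' 0 * b 1 - N' 1 * b 0) - g 2 * (N' 2 * b 0 - N' 0 * b 2))
      - e 1 * (g 0 * (N' 0 * b 1 - N' 1 * b 0) - g 2 * (N' 1 * b 2 - N' 2 * b 1))
      + e 2 * (g 0 * (N' 2 * b 0 - N' 0 * b 2) - g 1 * (N' 1 * b 2 - N' 2 * b 1))) * h1
    - (e 0 * (g 1 * (N 0 * b 1 - N 1 * b 0) - g 2 * (N 2 * b 0 - N 0 * b 2))
      - e 1 * (g 0 * (N 0 * b 1 - N 1 * b 0) - g 2 * (N 1 * b 2 - N 2 * b 1))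
      + e 2 * (g 0 * (N 2 * b 0 - N 0 * b 2) - g 1 * (N 1 * b 2 - N 2 * b 1))) * h3
    - (e 0 * (g 1 * (N' 0 * a 1 - N' 1 * a 0) - g 2 * (N' 2 * a 0 - N' 0 * a 2))
      - e 1 * (g 0 * (N' 0 * a 1 - N' 1 * a 0) - g 2 * (N' 1 * a 2 - N' 2 * a 1))
      + e 2 * (g 0 * (N' 2 * a 0 - N' 0 * a 2) - g 1 * (N' 1 * a 2 - N' 2 * a 1))) * h2
    + (e 0 * (g 1 * (N 0 * a 1 - N 1 * a 0) - g 2 * (N 2 * a 0 - N 0 * a 2))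
      - e 1 * (g 0 * (N 0 * a 1 - N 1 * a 0) - g 2 * (N 1 * a 2 - N 2 * a 1))
      + e 2 * (g 0 * (N 2 * a 0 - N 0 * a 2) - g 1 * (N 1 * a 2 - N 2 * a 1))) * h4

/-- the Gauss curvature of an edge-constraint quad does not depend on
the choice of unit face normal. -/
theorem stmt_6 (f f₁ f₂ f₁₂ n n₁ n₂ n₁₂ : Fin 3 → ℝ)
    (hn : dot3 n n = 1) (hn₁ : dot3 n₁ n₁ = 1) (hn₂ : dot3 n₂ n₂ = 1)
    (hn₁₂ : dot3 n₁₂ n₁₂ = 1)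
    (hec1 : dot3 (f₁ - f) (n₁ + n) = 0) (hec2 : dot3 (f₂ - f) (n₂ + n) = 0)
    (hec3 : dot3 (f₁₂ - f₁) (n₁₂ + n₁) = 0) (hec4 : dot3 (f₁₂ - f₂) (n₁₂ + n₂) = 0)
    (N N' : Fin 3 → ℝ)
    (hN : dot3 N N = 1) (hN' : dot3 N' N' = 1)
    (hNa : dot3 N (n₁₂ - n) = 0) (hNb : dot3 N (n₂ - n₁) = 0)
    (hN'a : dot3 N' (n₁₂ - n) = 0) (hN'b : dot3 N' (n₂ - n₁) = 0)
    (hden : det3 (f₁₂ - f) (f₂ - f₁) N ≠ 0) (hden' : det3 (f₁₂ - f) (f₂ - f₁) N' ≠ 0) :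
    det3 (n₁₂ - n) (n₂ - n₁) N / det3 (f₁₂ - f) (f₂ - f₁) N =
      det3 (n₁₂ - n) (n₂ - n₁) N' / det3 (f₁₂ - f) (f₂ - f₁) N' := by
  rw [div_eq_div_iff hden hden']
  exact key _ _ _ _ _ _ hNa hNb hN'a hN'b
end

section
/- Define U = [[cot(δᵤ/2)·H₁/H, iλ],[iλ, cot(δᵤ/2)·H/H₁]] and V = [[1, (i/λ)·tan(δᵥ/2)·H₂H],[(i/λ)·tan(δᵥ/2)/(H₂H), 1]] with H = e^{ih}. Then the zero-curvature (compatibility) condition V₁U = U₂V, holding for all λ ≠ 0 (where V₁ uses H₁, H₁₂ and U₂ uses H₂, H₁₂), implies the discrete Hirota equation: e^{i(h₁₂+h)} − e^{i(h₁+h₂)} = tan(δᵤ/2)·tan(δᵥ/2)·(1 − e^{i(h+h₁+h₁₂+h₂)}). -/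
open Complex Matrix

/-- The K-net Lax matrix `U`, depending on `δᵤ`, the vertex values `h, h₁` and the
spectral parameter `λ`, with `H = e^{ih}`, `H₁ = e^{ih₁}`. -/
noncomputable def Umat (δu h h1 : ℝ) (lam : ℂ) : Matrix (Fin 2) (Fin 2) ℂ :=
  !![Complex.cot (δu / 2) * (Complex.exp (I * h1) / Complex.exp (I * h)), I * lam;
     I * lam, Complex.cot (δu / 2) * (Complex.exp (I * h) / Complex.exp (I * h1))]

/-- The K-net Lax matrix `V`, depending on `δᵥ`, the vertex values `h, h₂` and the
spectral parameter `λ`, with `H = e^{ih}`, `H₂ = e^{ih₂}`. -/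
noncomputable def Vmat (δv h h2 : ℝ) (lam : ℂ) : Matrix (Fin 2) (Fin 2) ℂ :=
  !![1, (I / lam) * Complex.tan (δv / 2) * (Complex.exp (I * h2) * Complex.exp (I * h));
     (I / lam) * Complex.tan (δv / 2) / (Complex.exp (I * h2) * Complex.exp (I * h)), 1]

/-- the zero-curvature condition `V₁U = U₂V` for all `λ ≠ 0` implies the
discrete Hirota equation. -/
theorem stmt_8 (h h1 h2 h12 δu δv : ℝ)
    (hu : Real.tan (δu / 2) ≠ 0) (hv : Real.tan (δv / 2) ≠ 0)
    (hcu : Real.cos (δu / 2) ≠ 0) (hcv : Real.cos (δv / 2) ≠ 0)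
    (hsu : Real.sin (δu / 2) ≠ 0)
    (hzc : ∀ lam : ℂ, lam ≠ 0 →
      Vmat δv h1 h12 lam * Umat δu h h1 lam = Umat δu h2 h12 lam * Vmat δv h h2 lam) :
    Complex.exp (I * (h12 + h)) - Complex.exp (I * (h1 + h2)) =
      Complex.tan ((δu : ℂ) / 2) * Complex.tan ((δv : ℂ) / 2) *
        (1 - Complex.exp (I * (h + h1 + h12 + h2))) := by
  have key := congrFun (congrFun (hzc 1 one_ne_zero) 0) 0
  simp [Umat, Vmat, Matrix.mul_apply, Fin.sum_univ_two] at key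
  have hs : Complex.sin (↑δu / 2) ≠ 0 := by
    have e : ((δu : ℂ) / 2) = ((δu / 2 : ℝ) : ℂ) := by push_cast; ring
    rw [e, ← Complex.ofReal_sin]; exact_mod_cast hsu
  have hc : Complex.cos (↑δu / 2) ≠ 0 := by
    have e : ((δu : ℂ) / 2) = ((δu / 2 : ℝ) : ℂ) := by push_cast; ring
    rw [e, ← Complex.ofReal_cos]; exact_mod_cast hcu
  have hA := Complex.exp_ne_zero (Complex.I * h)
  have hB := Complex.exp_ne_zero (Complex.I * h1)
  have hC := Complex.exp_ne_zero (Complex.I * h2)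
  have hD := Complex.exp_ne_zero (Complex.I * h12)
  set tv := Complex.tan ((δv : ℂ) / 2) with htv
  rw [Complex.cot_eq_cos_div_sin] at key
  rw [Complex.tan_eq_sin_div_cos]
  set s := Complex.sin ((δu : ℂ) / 2) with hss
  set c := Complex.cos ((δu : ℂ) / 2) with hcc
  set A := Complex.exp (Complex.I * h) with hAe
  set B := Complex.exp (Complex.I * h1) with hBe
  set C := Complex.exp (Complex.I * h2) with hCe
  set D := Complex.exp (Complex.I * h12) with hDe
  simp only [Complex.ofReal_add, mul_add, Complex.exp_add, ← hAe, ← hBe, ← hCe, ← hDe]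
  have key2 : c * (B * C) - tv * s * (D * B * A * C) = c * (D * A) - tv * s := by
    have h3 : (s * C * A) * (c * (B * C) - tv * s * (D * B * A * C)) =
        (s * C * A) * (c * (D * A) - tv * s) := by
      field_simp at key
      linear_combination s * C * A * key + s ^ 2 * C * A * tv * (1 - A * B * C * D) * Complex.I_sq
    exact mul_left_cancel₀ (mul_ne_zero (mul_ne_zero hs hC) hA) h3
  field_simp
  linear_combination (-1 : ℂ) * key2
end

section
/- The gauge transformation G = diag(√s, 1/√s) applied to the cK-net Lax matrix L yields G₁⁻¹ L G = [[l·(cot(δ₁/2)/√(s₁s) + tan(δ₁/2)·√(s₁s)), i·λ/√(s₁s) − i·√(s₁s)/λ],[i·λ·√(s₁s) − i/(λ·√(s₁s)), (1/l)·(cot(δ₁/2)·√(s₁s) + tan(δ₁/2)/√(s₁s))]], i.e., the conjugated matrix depends on the vertex variables only through the product s₁s. -/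
set_option maxHeartbeats 1000000

open Complex Matrix

/-- the gauge transformation `G = diag(√s, 1/√s)` applied to the cK-net
Lax matrix `L` yields a matrix depending on the vertex variables only through the
product `s₁ s`. Here `ss` and `ss₁` denote the chosen square roots of `s` and `s₁`. -/
theorem stmt_18 (s s₁ l lam δ₁ : ℂ) (ss ss₁ : ℂ)
    (hs : s ≠ 0) (hs₁ : s₁ ≠ 0) (hl : l ≠ 0) (hlam : lam ≠ 0)
    (hss : ss ^ 2 = s) (hss₁ : ss₁ ^ 2 = s₁)
    (hcos : Complex.cos (δ₁ / 2) ≠ 0) (hsin : Complex.sin (δ₁ / 2) ≠ 0) :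
    (!![ss₁, 0; 0, ss₁⁻¹] : Matrix (Fin 2) (Fin 2) ℂ)⁻¹ *
      (!![Complex.cot (δ₁ / 2) * (l / s) + Complex.tan (δ₁ / 2) * l * s₁,
          I * (lam - s * s₁ / lam);
          I * (lam - 1 / (lam * s * s₁)),
          Complex.cot (δ₁ / 2) * (s / l) + Complex.tan (δ₁ / 2) / (l * s₁)]) *
      !![ss, 0; 0, ss⁻¹] =
    !![l * (Complex.cot (δ₁ / 2) / (ss₁ * ss) + Complex.tan (δ₁ / 2) * (ss₁ * ss)),
       I * lam / (ss₁ * ss) - I * (ss₁ * ss) / lam;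
       I * lam * (ss₁ * ss) - I / (lam * (ss₁ * ss)),
       (1 / l) * (Complex.cot (δ₁ / 2) * (ss₁ * ss) + Complex.tan (δ₁ / 2) / (ss₁ * ss))] := by
  have hss0 : ss ≠ 0 := by intro h; apply hs; rw [← hss, h]; ring
  have hss₁0 : ss₁ ≠ 0 := by intro h; apply hs₁; rw [← hss₁, h]; ring
  have hinv : (!![ss₁, 0; 0, ss₁⁻¹] : Matrix (Fin 2) (Fin 2) ℂ)⁻¹
      = !![ss₁⁻¹, 0; 0, ss₁] := by
    rw [Matrix.inv_def, Matrix.adjugate_fin_two, Matrix.det_fin_two]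
    simp [Matrix.smul_of, mul_inv_cancel₀ hss₁0]
  rw [hinv]
  subst hss hss₁
  rw [Complex.cot_eq_cos_div_sin, Complex.tan_eq_sin_div_cos,
    Matrix.mul_fin_two, Matrix.mul_fin_two]
  set co := Complex.cos (δ₁ / 2) with hco
  set si := Complex.sin (δ₁ / 2) with hsi
  clear_value co si
  have h1 : ss₁ ^ 2 ≠ 0 := pow_ne_zero _ hss₁0
  have h2 : ss ^ 2 ≠ 0 := pow_ne_zero _ hss0
  have h3 : ss₁ * ss ≠ 0 := mul_ne_zero hss₁0 hss0
  have h4 : l * ss₁ ^ 2 ≠ 0 := mul_ne_zero hl h1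
  have h5 : ss ^ 2 * ss₁ ^ 2 ≠ 0 := mul_ne_zero h2 h1
  have h6 : lam * ss ^ 2 * ss₁ ^ 2 ≠ 0 := mul_ne_zero (mul_ne_zero hlam h2) h1
  have h7 : lam * (ss₁ * ss) ≠ 0 := mul_ne_zero hlam h3
  have h8 : lam * (ss ^ 2 * ss₁ ^ 2) ≠ 0 := mul_ne_zero hlam h5
  ext i j
  fin_cases i <;> fin_cases j <;>
    simp only [Matrix.cons_val', Matrix.cons_val_zero, Matrix.cons_val_one,
      Matrix.head_cons, Matrix.head_fin_const, Matrix.empty_val',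
      Matrix.cons_val_fin_one, Matrix.of_apply, Fin.mk_zero, Fin.mk_one,
      Fin.isValue] <;>
    field_simp <;> ring
end
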